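/- Suppose M ⊆ N are models of ZFC (as transitive sets or classes), P ∈ M is a partial order, the powerset of P as computed in M is an element of M, and N contains a filter G ⊆ P meeting every dense subset of P that lies in M, with G ∉ M. Then M is not an elementary submodel of N. -/

import Mathlib

open FirstOrder

/-- The language of set theory: a single binary relation `∈`. -/
def memLang : Language :=
  ⟨fun _ => Empty, fun n => match n with | 2 => PUnit | _ => Empty⟩

/-- Any class of ZFC sets is a structure in the language of set theory,
interpreting the binary relation as membership. -/
instance memLangStructure (S : Set ZFSet) : memLang.Structure S where
  funMap := fun {_} f _ => f.elim
  RelMap := fun {n} r x =>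
    match n, r, x with
    | 2, _, x => ((x 0 : ZFSet) ∈ (x 1 : ZFSet))

/-- Realization of a formula of the language of set theory in a class of ZFC
sets, with free variables interpreted by `v`. -/
def RealizeIn (S : Set ZFSet) {n : ℕ} (φ : memLang.BoundedFormula Empty n)
    (v : Fin n → S) : Prop :=
  φ.Realize (fun e => e.elim) v

/-- A transitive set `M` is a model of ZFC: it is transitive (hence satisfies
extensionality and foundation) and satisfies pairing, union, powerset,
infinity, the separation and collection schemas for first-order formulas in
the language of set theory, and choice. -/
structure IsZFCModel (M : ZFSet) : Prop where
  transitive : M.IsTransitive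
  empty_mem : (∅ : ZFSet) ∈ M
  pair_mem : ∀ x ∈ M, ∀ y ∈ M, ({x, y} : ZFSet) ∈ M
  union_mem : ∀ x ∈ M, (ZFSet.sUnion x : ZFSet) ∈ M
  powerset_mem : ∀ x ∈ M, ∃ p ∈ M, ∀ z ∈ M, (z ∈ p ↔ z ⊆ x)
  omega_mem : ZFSet.omega ∈ M
  separation : ∀ (n : ℕ) (φ : memLang.BoundedFormula Empty (n + 1))
    (v : Fin n → M.toSet), ∀ x ∈ M, ∃ s ∈ M, ∀ z : ZFSet,
      z ∈ s ↔ ∃ hz : z ∈ M, z ∈ x ∧ RealizeIn M.toSet φ (Fin.snoc v ⟨z, hz⟩)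
  collection : ∀ (n : ℕ) (φ : memLang.BoundedFormula Empty (n + 2))
    (v : Fin n → M.toSet), ∀ x ∈ M,
    (∀ z, ∀ hz : z ∈ M, z ∈ x → ∃ w, ∃ hw : w ∈ M,
      RealizeIn M.toSet φ (Fin.snoc (Fin.snoc v ⟨z, hz⟩) ⟨w, hw⟩)) →
    ∃ c ∈ M, ∀ z, ∀ hz : z ∈ M, z ∈ x → ∃ w, ∃ hw : w ∈ M, w ∈ c ∧
      RealizeIn M.toSet φ (Fin.snoc (Fin.snoc v ⟨z, hz⟩) ⟨w, hw⟩)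
  choice : ∀ F ∈ M, (∀ a ∈ F, a ≠ (∅ : ZFSet)) →
    (∀ a ∈ F, ∀ b ∈ F, a ≠ b → ¬∃ z : ZFSet, z ∈ a ∧ z ∈ b) →
    ∃ c ∈ M, ∀ a ∈ F, ∃ z : ZFSet, z ∈ c ∧ z ∈ a ∧
      ∀ w : ZFSet, w ∈ c → w ∈ a → w = z

/-- `M` is an elementary submodel of `N` (both transitive sets viewed as
`∈`-structures): every first-order formula of the language of set theory with
parameters from `M` holds in `M` iff it holds in `N`. -/
def ElemSub (M N : ZFSet) (h : M ⊆ N) : Prop :=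
  ∀ (n : ℕ) (φ : memLang.BoundedFormula Empty n) (v : Fin n → M.toSet),
    RealizeIn M.toSet φ v ↔ RealizeIn N.toSet φ (fun i => ⟨(v i).1, h (v i).2⟩)

def memF {n : ℕ} (t u : memLang.Term (Empty ⊕ Fin n)) : memLang.BoundedFormula Empty n :=
  Language.Relations.boundedFormula₂ (PUnit.unit : memLang.Relations 2) t u

lemma relMap_mem (S : Set ZFSet) (r : memLang.Relations 2) (x : Fin 2 → S) :
    Language.Structure.RelMap r x = (((x 0 : S) : ZFSet) ∈ ((x 1 : S) : ZFSet)) := rfl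

/-- The formula `∃ x (∀ z (z ∈ x → z ∈ &0) ∧ ¬ x ∈ &1)`. -/
def genF : memLang.BoundedFormula Empty 2 :=
  ((memF (&3) (&2) ⟹ memF (&3) (&0 : memLang.Term (Empty ⊕ Fin 4))).all ⊓
    ∼(memF (&2) (&1 : memLang.Term (Empty ⊕ Fin 3)))).ex

lemma realize_genF (S : Set ZFSet) (v : Fin 2 → S) :
    RealizeIn S genF v ↔ ∃ x : S, (∀ z : S, (z : ZFSet) ∈ (x : ZFSet) →
      (z : ZFSet) ∈ (v 0 : ZFSet)) ∧ ¬ ((x : ZFSet) ∈ (v 1 : ZFSet)) := by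
  simp [RealizeIn, genF, memF, Language.BoundedFormula.realize_ex,
    Language.BoundedFormula.realize_inf, Language.BoundedFormula.realize_all,
    Language.BoundedFormula.realize_imp, Language.BoundedFormula.realize_not,
    Language.BoundedFormula.realize_rel₂, Fin.snoc, relMap_mem, Fin.ext_iff]
  tauto

/-- Suppose `M ⊆ N` are transitive models of ZFC, `P ∈ M` is a partial order
(with order relation `R ∈ M`, coded as a set of Kuratowski pairs, `p ≤ q` iff
`pair p q ∈ R`), the powerset of `P` as computed in `M` is an element of `M`,
and `N` contains a filter `G ⊆ P` meeting every dense subset of `P` lying in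
`M`, with `G ∉ M`.  Then `M` is not an elementary submodel of `N`. -/
theorem not_elementary_of_generic (M N : ZFSet) (hMN : M ⊆ N)
    (hM : IsZFCModel M) (hN : IsZFCModel N)
    (P R : ZFSet) (hPM : P ∈ M) (hRM : R ∈ M)
    (hRP : R ⊆ P.prod P)
    (hrefl : ∀ p ∈ P, ZFSet.pair p p ∈ R)
    (hantisymm : ∀ p ∈ P, ∀ q ∈ P,
      ZFSet.pair p q ∈ R → ZFSet.pair q p ∈ R → p = q)
    (htrans : ∀ p ∈ P, ∀ q ∈ P, ∀ r ∈ P,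
      ZFSet.pair p q ∈ R → ZFSet.pair q r ∈ R → ZFSet.pair p r ∈ R)
    (PP : ZFSet) (hPPM : PP ∈ M)
    (hPP : ∀ z : ZFSet, z ∈ PP ↔ z ∈ M ∧ z ⊆ P)
    (G : ZFSet) (hGN : G ∈ N) (hGP : G ⊆ P) (hGne : G.Nonempty)
    (hup : ∀ p ∈ G, ∀ q ∈ P, ZFSet.pair p q ∈ R → q ∈ G)
    (hdir : ∀ p ∈ G, ∀ q ∈ G, ∃ r ∈ G,
      ZFSet.pair r p ∈ R ∧ ZFSet.pair r q ∈ R)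
    (hgen : ∀ D ∈ M, D ⊆ P → (∀ p ∈ P, ∃ q ∈ D, ZFSet.pair q p ∈ R) →
      ∃ q, q ∈ G ∧ q ∈ D)
    (hGnotM : G ∉ M) :
    ¬ ElemSub M N hMN := by
  intro h
  have key := h 2 genF ![⟨P, hPM⟩, ⟨PP, hPPM⟩]
  rw [realize_genF, realize_genF] at key
  simp only [Matrix.cons_val_zero, Matrix.cons_val_one, Matrix.head_cons] at key
  have hNside : ∃ x : N.toSet, (∀ z : N.toSet, (z : ZFSet) ∈ (x : ZFSet) → (z : ZFSet) ∈ P)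
      ∧ ¬ ((x : ZFSet) ∈ PP) := by
    refine ⟨⟨G, hGN⟩, fun z hz => hGP hz, fun hmem => ?_⟩
    exact hGnotM ((hPP G).mp hmem).1
  obtain ⟨x, hx1, hx2⟩ := key.mpr hNside
  refine hx2 ((hPP x).mpr ⟨x.2, fun z hz => ?_⟩)
  exact hx1 ⟨z, hM.transitive x.1 x.2 hz⟩ hz
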